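/- For m+1 ≤ i ≤ m+n−1, the isomorphism ρ_{n|m} ∘ ω_{n|m} : Y(gl_{n|m}) → Y(gl_{m|n}) satisfies (ρ_{n|m} ∘ ω_{n|m})(f_{m+n−i}(v)) = −e_i(v) and (ρ_{n|m} ∘ ω_{n|m})(e_{m+n−i}(v)) = −f_i(v), where the e's and f's on the left are the Gauss-decomposition series of Y(gl_{n|m}) and those on the right are the Gauss-decomposition series of Y(gl_{m|n}). -/

import Mathlib

/-!
Common setup: the super Yangian `Y(gl_{m|n})`, defined as the quotient of the free
algebra on generators `t_{ij}^{(r)}` (here `(i, j, r) : Fin (m+n) × Fin (m+n) × ℕ`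
encodes `t_{ij}^{(r+1)}`) by the defining relations, obtained by equating the
coefficients of `u^{-r} v^{-s}` in
`(u-v)[t_{ij}(u), t_{kl}(v)]
   = (-1)^{ī j̄ + ī k̄ + j̄ k̄} (t_{kj}(u) t_{il}(v) - t_{kj}(v) t_{il}(u))`.
Power series in `u^{-1}` are modelled by `PowerSeries`, whose variable stands
for `u^{-1}`.
-/

noncomputable section

namespace SuperYangian

open scoped BigOperators

/-- Generator index: `(i, j, r)` encodes the generator `t_{ij}^{(r+1)}`. -/
abbrev Gen (N : ℕ) := Fin N × Fin N × ℕ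

/-- The free algebra on the generators. -/
abbrev FA (N : ℕ) := FreeAlgebra ℂ (Gen N)

/-- Parity of an index: `0` for the first `m` indices, `1` for the remaining ones. -/
def par (m : ℕ) {N : ℕ} (i : Fin N) : ℕ := if (i : ℕ) < m then 0 else 1

/-- The sign `(-1)^{ī j̄ + ī k̄ + j̄ k̄}`. -/
def sgn3 (m : ℕ) {N : ℕ} (i j k : Fin N) : ℤ :=
  (-1) ^ (par m i * par m j + par m i * par m k + par m j * par m k)

/-- The series `t_{ij}(u) = δ_{ij} + Σ_{r ≥ 1} t_{ij}^{(r)} u^{-r}` over the free algebra. -/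
def tF {N : ℕ} (i j : Fin N) : PowerSeries (FA N) :=
  PowerSeries.mk fun r =>
    if r = 0 then (if i = j then 1 else 0) else FreeAlgebra.ι ℂ (i, j, r - 1)

/-- The element of the free algebra expressing, at bidegree `u^{-r} v^{-s}`, the defining
relation `(u-v)[t_{ij}(u), t_{kl}(v)]
  = (-1)^{ī j̄ + ī k̄ + j̄ k̄}(t_{kj}(u) t_{il}(v) - t_{kj}(v) t_{il}(u))`. -/
def relElt (m : ℕ) {N : ℕ} (i j k l : Fin N) (r s : ℕ) : FA N :=
  ((PowerSeries.coeff (r+1) (tF i j)) * (PowerSeries.coeff s (tF k l))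
      - (PowerSeries.coeff s (tF k l)) * (PowerSeries.coeff (r+1) (tF i j)))
  - ((PowerSeries.coeff r (tF i j)) * (PowerSeries.coeff (s+1) (tF k l))
      - (PowerSeries.coeff (s+1) (tF k l)) * (PowerSeries.coeff r (tF i j)))
  - sgn3 m i j k •
      ((PowerSeries.coeff r (tF k j)) * (PowerSeries.coeff s (tF i l))
        - (PowerSeries.coeff s (tF k j)) * (PowerSeries.coeff r (tF i l)))

/-- The defining relations of `Y(gl_{m|n})`. -/
inductive YRel (m n : ℕ) : FA (m+n) → FA (m+n) → Prop
  | rel (i j k l : Fin (m+n)) (r s : ℕ) : YRel m n (relElt m i j k l r s) 0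

/-- The super Yangian `Y(gl_{m|n})`. -/
abbrev Yangian (m n : ℕ) := RingQuot (YRel m n)

/-- The canonical projection from the free algebra onto the Yangian. -/
def proj (m n : ℕ) : FA (m+n) →ₐ[ℂ] Yangian m n := RingQuot.mkAlgHom ℂ (YRel m n)

/-- The generator `t_{ij}^{(r+1)}` of `Y(gl_{m|n})` (`tGen i j r` is `t_{ij}^{(r+1)}`,
so that as `r` ranges over `ℕ` we get exactly the generators `t_{ij}^{(s)}`, `s ≥ 1`). -/
def tGen {m n : ℕ} (i j : Fin (m+n)) (r : ℕ) : Yangian m n :=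
  proj m n (FreeAlgebra.ι ℂ (i, j, r))

/-- The generating series `t_{ij}(u) ∈ Y(gl_{m|n})[[u^{-1}]]`. -/
def t {m n : ℕ} (i j : Fin (m+n)) : PowerSeries (Yangian m n) :=
  PowerSeries.mk fun r => if r = 0 then (if i = j then 1 else 0) else tGen i j (r - 1)

/-- The matrix `T(u)`. -/
def T (m n : ℕ) : Matrix (Fin (m+n)) (Fin (m+n)) (PowerSeries (Yangian m n)) :=
  Matrix.of fun i j => t i j

/-- The inverse matrix `T(u)^{-1}` (`T(u)` is a unit of the matrix ring, since its
constant term is the identity matrix, so `Ring.inverse` produces the genuine inverse). -/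
def T' (m n : ℕ) : Matrix (Fin (m+n)) (Fin (m+n)) (PowerSeries (Yangian m n)) :=
  Ring.inverse (T m n)

/-- The series `t'_{ij}(u)`: the `(i,j)` entry of `T(u)^{-1}`. -/
def t' {m n : ℕ} (i j : Fin (m+n)) : PowerSeries (Yangian m n) := T' m n i j

/-- `g(u - c)`: substitute `u - c` for `u` and expand in powers of `u^{-1}`, using
`(u-c)^{-r} = Σ_{s ≥ 0} C(r+s-1, s) c^s u^{-r-s}`. -/
def shift {A : Type*} [Ring A] (c : ℤ) (g : PowerSeries A) : PowerSeries A :=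
  PowerSeries.mk fun p => ∑ r ∈ Finset.range (p+1),
    (((p-1).choose (p-r) : ℤ) * c ^ (p-r)) • PowerSeries.coeff (R := A) r g

/-- `g(-u)`: replace `u^{-r}` by `(-1)^r u^{-r}`. -/
def negu {A : Type*} [Ring A] (g : PowerSeries A) : PowerSeries A :=
  PowerSeries.mk fun p => ((-1 : ℤ) ^ p) • PowerSeries.coeff (R := A) p g

/-- The quantum determinant type series
`C_m(u) = Σ_{τ ∈ S_m} sgn τ · t_{τ(1)1}(u) t_{τ(2)2}(u-1) ⋯ t_{τ(m)m}(u-m+1)`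
of the `gl_m` block of `Y(gl_{m|n})`. -/
def Cm (m n : ℕ) : PowerSeries (Yangian m n) :=
  ∑ τ : Equiv.Perm (Fin m), (Equiv.Perm.sign τ : ℤ) •
    ((List.finRange m).map fun (a : Fin m) =>
      shift ((a : ℕ) : ℤ)
        (t (Fin.castLE (Nat.le_add_right m n) (τ a))
           (Fin.castLE (Nat.le_add_right m n) a))).prod

/-- The second factor of the quantum Berezinian:
`Σ_{σ ∈ S_n} sgn σ · t'_{m+1, m+σ(1)}(u-m+1) ⋯ t'_{m+n, m+σ(n)}(u-m+n)`. -/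
def berSecond (m n : ℕ) : PowerSeries (Yangian m n) :=
  ∑ σ : Equiv.Perm (Fin n), (Equiv.Perm.sign σ : ℤ) •
    ((List.finRange n).map fun (b : Fin n) =>
      shift ((m : ℤ) - 1 - (b : ℕ))
        (t' (Fin.natAdd m b) (Fin.natAdd m (σ b)))).prod

/-- The quantum Berezinian `b_{m|n}(u)`. -/
def ber (m n : ℕ) : PowerSeries (Yangian m n) := Cm m n * berSecond m n

/-- Gauss decomposition data: `D` is diagonal (with invertible diagonal entries, i.e.
constant term `1`), `E` upper unitriangular, `F` lower unitriangular, and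
`T(u) = F(u) D(u) E(u)`. -/
def IsGauss (m n : ℕ)
    (F D E : Matrix (Fin (m+n)) (Fin (m+n)) (PowerSeries (Yangian m n))) : Prop :=
  (∀ i j, i ≠ j → D i j = 0) ∧
  (∀ i, PowerSeries.constantCoeff (D i i) = 1) ∧
  (∀ i, E i i = 1) ∧ (∀ i j : Fin (m+n), (j : ℕ) < (i : ℕ) → E i j = 0) ∧
  (∀ i, F i i = 1) ∧ (∀ i j : Fin (m+n), (i : ℕ) < (j : ℕ) → F i j = 0) ∧
  T m n = F * D * E

/-- The top-left `(i+1) × (i+1)` submatrix of `T(u)` (`0`-indexed `i`). -/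
def subT (m n : ℕ) (i : Fin (m+n)) :
    Matrix (Fin ((i : ℕ)+1)) (Fin ((i : ℕ)+1)) (PowerSeries (Yangian m n)) :=
  Matrix.of fun a b => t (Fin.castLE i.isLt a) (Fin.castLE i.isLt b)

/-- The quasideterminant `d_{i+1}(u)` (`0`-indexed: `dQ m n i` is the `(i+1, i+1)`
quasideterminant of the top-left `(i+1) × (i+1)` submatrix of `T(u)`). -/
def dQ (m n : ℕ) (i : Fin (m+n)) : PowerSeries (Yangian m n) :=
  Ring.inverse (Ring.inverse (subT m n i) (Fin.last (i : ℕ)) (Fin.last (i : ℕ)))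

/-- Formal series in the two variables `u^{-1}`, `v^{-1}` (variable `0` is `u^{-1}`,
variable `1` is `v^{-1}`). -/
abbrev Bi (A : Type*) := MvPowerSeries (Fin 2) A

/-- Embed a series in `u^{-1}` into the two-variable series ring. -/
def inU {A : Type*} [Semiring A] (g : PowerSeries A) : Bi A :=
  fun d => if d 1 = 0 then PowerSeries.coeff (R := A) (d 0) g else 0

/-- Embed a series in `v^{-1}` into the two-variable series ring. -/
def inV {A : Type*} [Semiring A] (g : PowerSeries A) : Bi A :=
  fun d => if d 0 = 0 then PowerSeries.coeff (R := A) (d 1) g else 0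

/-- The coefficient of `u^{-r} v^{-s}`. -/
def bc {A : Type*} [Semiring A] (r s : ℕ) (g : Bi A) : A :=
  MvPowerSeries.coeff (R := A) (Finsupp.single 0 r + Finsupp.single 1 s) g

/-- The characterizing property of the automorphism `ω_{m|n}`:
`ω(t_{ij}(u)) = t'_{ij}(-u)`, i.e. `T(u) ↦ T(-u)^{-1}` coefficientwise. -/
def omegaProp (m n : ℕ) (ω : Yangian m n →ₐ[ℂ] Yangian m n) : Prop :=
  ∀ i j : Fin (m+n), PowerSeries.map ω.toRingHom (t i j) = negu (t' i j)

/-- The index map `i ↦ m+n+1-i` (in `1`-based labelling) from the indices of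
`Y(gl_{m|n})` to those of `Y(gl_{n|m})`. -/
def flipIdx {m n : ℕ} (i : Fin (m+n)) : Fin (n+m) :=
  ⟨m + n - 1 - (i : ℕ), by have := i.isLt; omega⟩

/-- The characterizing property of the isomorphism `ρ_{m|n} : Y(gl_{m|n}) → Y(gl_{n|m})`:
`ρ(t_{ij}(u)) = t_{m+n+1-i, m+n+1-j}(-u)`. -/
def rhoProp (m n : ℕ) (ρ : Yangian m n →ₐ[ℂ] Yangian n m) : Prop :=
  ∀ i j : Fin (m+n), PowerSeries.map ρ.toRingHom (t i j) = negu (t (flipIdx i) (flipIdx j))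

/-- The index map `i ↦ k + i` from indices of `Y(gl_{m|n})` to indices of
`Y(gl_{m+k|n})` (whose total size `M + n` is recorded via `M = m + k`). -/
def addIdx {m n : ℕ} (k M : ℕ) (hM : M = m + k) (i : Fin (m+n)) : Fin (M+n) :=
  ⟨k + (i : ℕ), by have := i.isLt; omega⟩

/-- The characterizing property of the inclusion `φ_{m|n} : Y(gl_{m|n}) → Y(gl_{m+k|n})`:
`t_{ij}^{(r)} ↦ t_{k+i, k+j}^{(r)}`. -/
def phiProp (m n k M : ℕ) (hM : M = m + k) (φ : Yangian m n →ₐ[ℂ] Yangian M n) : Prop :=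
  ∀ i j : Fin (m+n),
    PowerSeries.map φ.toRingHom (t i j) = t (addIdx k M hM i) (addIdx k M hM j)

/-- The `(k+1, k+1)` quasideterminant of a `(k+1) × (k+1)` matrix. -/
def qdet {R : Type*} [Ring R] {k : ℕ} (X : Matrix (Fin (k+1)) (Fin (k+1)) R) : R :=
  Ring.inverse (Ring.inverse X (Fin.last k) (Fin.last k))

end SuperYangian
namespace SuperYangian


/-! ### Auxiliary material -/

section Aux

open Matrix

variable {R : Type*} [Ring R] {sz : ℕ}

/-- Strictly upper triangular. -/
def SUp (X : Matrix (Fin sz) (Fin sz) R) : Prop := ∀ i j : Fin sz, (j : ℕ) ≤ (i : ℕ) → X i j = 0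

/-- Strictly lower triangular. -/
def SLo (X : Matrix (Fin sz) (Fin sz) R) : Prop := ∀ i j : Fin sz, (i : ℕ) ≤ (j : ℕ) → X i j = 0

/-- Upper unitriangular. -/
def UniUp (X : Matrix (Fin sz) (Fin sz) R) : Prop :=
  (∀ i, X i i = 1) ∧ ∀ i j : Fin sz, (j : ℕ) < (i : ℕ) → X i j = 0

/-- Lower unitriangular. -/
def UniLo (X : Matrix (Fin sz) (Fin sz) R) : Prop :=
  (∀ i, X i i = 1) ∧ ∀ i j : Fin sz, (i : ℕ) < (j : ℕ) → X i j = 0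

lemma SUp.pow_apply {X : Matrix (Fin sz) (Fin sz) R} (h : SUp X) :
    ∀ (k : ℕ) (i j : Fin sz), (j : ℕ) < (i : ℕ) + k → (X ^ k) i j = 0 := by
  intro k
  induction k with
  | zero =>
    intro i j hij
    rw [pow_zero]
    exact Matrix.one_apply_ne (by rintro rfl; omega)
  | succ k ih =>
    intro i j hij
    rw [pow_succ, Matrix.mul_apply]
    apply Finset.sum_eq_zero
    intro l _
    rcases lt_or_ge (l : ℕ) ((i : ℕ) + k) with hl | hl
    · rw [ih i l hl, zero_mul]
    · rw [h l j (by omega), mul_zero]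

lemma SLo.pow_apply {X : Matrix (Fin sz) (Fin sz) R} (h : SLo X) :
    ∀ (k : ℕ) (i j : Fin sz), (i : ℕ) < (j : ℕ) + k → (X ^ k) i j = 0 := by
  intro k
  induction k with
  | zero =>
    intro i j hij
    rw [pow_zero]
    exact Matrix.one_apply_ne (by rintro rfl; omega)
  | succ k ih =>
    intro i j hij
    rw [pow_succ', Matrix.mul_apply]
    apply Finset.sum_eq_zero
    intro l _
    rcases lt_or_ge (l : ℕ) ((j : ℕ) + k) with hl | hl
    · rw [ih l j hl, mul_zero]
    · rw [h i l (by omega), zero_mul]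

lemma SUp.pow_sz {X : Matrix (Fin sz) (Fin sz) R} (h : SUp X) : X ^ sz = 0 := by
  ext i j
  rw [Matrix.zero_apply]
  exact h.pow_apply sz i j (by have := j.isLt; omega)

lemma SLo.pow_sz {X : Matrix (Fin sz) (Fin sz) R} (h : SLo X) : X ^ sz = 0 := by
  ext i j
  rw [Matrix.zero_apply]
  exact h.pow_apply sz i j (by have := i.isLt; omega)

/-- Geometric-series inverse of `1 + X` for nilpotent `X`. -/
def geomInv (X : Matrix (Fin sz) (Fin sz) R) : Matrix (Fin sz) (Fin sz) R :=
  ∑ k ∈ Finset.range sz, (-X) ^ k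

lemma geomInv_mul_right {X : Matrix (Fin sz) (Fin sz) R} (h : X ^ sz = 0) :
    (1 + X) * geomInv X = 1 := by
  have h2 : (-X) ^ sz = 0 := by rw [neg_pow, h, mul_zero]
  have key := mul_geom_sum (-X) sz
  rw [h2, zero_sub] at key
  have key2 := congrArg Neg.neg key
  rw [← neg_mul, neg_neg, show -(-X - 1) = 1 + X from by abel] at key2
  exact key2

lemma geomInv_mul_left {X : Matrix (Fin sz) (Fin sz) R} (h : X ^ sz = 0) :
    geomInv X * (1 + X) = 1 := by
  have h2 : (-X) ^ sz = 0 := by rw [neg_pow, h, mul_zero]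
  have key := geom_sum_mul (-X) sz
  rw [h2, zero_sub] at key
  have key2 := congrArg Neg.neg key
  rw [← mul_neg, neg_neg, show -(-X - 1) = 1 + X from by abel] at key2
  exact key2

lemma geomInv_apply_of_SUp {X : Matrix (Fin sz) (Fin sz) R} (h : SUp X) (i j : Fin sz)
    (hij : (j : ℕ) ≤ (i : ℕ)) : geomInv X i j = (1 : Matrix (Fin sz) (Fin sz) R) i j := by
  have hS : SUp (-X) := fun a b hab => by rw [Matrix.neg_apply, h a b hab, neg_zero]
  unfold geomInv
  rw [Matrix.sum_apply]
  rw [Finset.sum_eq_single_of_mem 0 (Finset.mem_range.2 i.pos)]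
  · rw [pow_zero]
  · intro k _ hk
    exact hS.pow_apply k i j (by omega)

lemma geomInv_apply_of_SLo {X : Matrix (Fin sz) (Fin sz) R} (h : SLo X) (i j : Fin sz)
    (hij : (i : ℕ) ≤ (j : ℕ)) : geomInv X i j = (1 : Matrix (Fin sz) (Fin sz) R) i j := by
  have hS : SLo (-X) := fun a b hab => by rw [Matrix.neg_apply, h a b hab, neg_zero]
  unfold geomInv
  rw [Matrix.sum_apply]
  rw [Finset.sum_eq_single_of_mem 0 (Finset.mem_range.2 i.pos)]
  · rw [pow_zero]
  · intro k _ hk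
    exact hS.pow_apply k i j (by omega)

lemma UniUp.sup_sub_one {X : Matrix (Fin sz) (Fin sz) R} (h : UniUp X) : SUp (X - 1) := by
  intro i j hij
  rcases eq_or_lt_of_le hij with he | hl
  · have : i = j := (Fin.ext he.symm)
    subst this
    rw [Matrix.sub_apply, h.1, Matrix.one_apply_eq, sub_self]
  · rw [Matrix.sub_apply, h.2 i j hl, Matrix.one_apply_ne (by rintro rfl; omega), sub_zero]

lemma UniLo.slo_sub_one {X : Matrix (Fin sz) (Fin sz) R} (h : UniLo X) : SLo (X - 1) := by
  intro i j hij
  rcases eq_or_lt_of_le hij with he | hl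
  · have : i = j := (Fin.ext he)
    subst this
    rw [Matrix.sub_apply, h.1, Matrix.one_apply_eq, sub_self]
  · rw [Matrix.sub_apply, h.2 i j hl, Matrix.one_apply_ne (by rintro rfl; omega), sub_zero]

lemma UniUp.inv {X : Matrix (Fin sz) (Fin sz) R} (h : UniUp X) :
    UniUp (geomInv (X - 1)) ∧ X * geomInv (X - 1) = 1 ∧ geomInv (X - 1) * X = 1 := by
  have hS := h.sup_sub_one
  have hX : X = 1 + (X - 1) := by abel
  refine ⟨⟨?_, ?_⟩, ?_, ?_⟩
  · intro i
    rw [geomInv_apply_of_SUp hS i i le_rfl, Matrix.one_apply_eq]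
  · intro i j hij
    rw [geomInv_apply_of_SUp hS i j (le_of_lt hij), Matrix.one_apply_ne (by rintro rfl; omega)]
  · have := geomInv_mul_right hS.pow_sz
    rwa [show (1 : Matrix (Fin sz) (Fin sz) R) + (X - 1) = X from by abel] at this
  · have := geomInv_mul_left hS.pow_sz
    rwa [show (1 : Matrix (Fin sz) (Fin sz) R) + (X - 1) = X from by abel] at this

lemma UniLo.inv {X : Matrix (Fin sz) (Fin sz) R} (h : UniLo X) :
    UniLo (geomInv (X - 1)) ∧ X * geomInv (X - 1) = 1 ∧ geomInv (X - 1) * X = 1 := by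
  have hS := h.slo_sub_one
  have hX : X = 1 + (X - 1) := by abel
  refine ⟨⟨?_, ?_⟩, ?_, ?_⟩
  · intro i
    rw [geomInv_apply_of_SLo hS i i le_rfl, Matrix.one_apply_eq]
  · intro i j hij
    rw [geomInv_apply_of_SLo hS i j (le_of_lt hij), Matrix.one_apply_ne (by rintro rfl; omega)]
  · have := geomInv_mul_right hS.pow_sz
    rwa [show (1 : Matrix (Fin sz) (Fin sz) R) + (X - 1) = X from by abel] at this
  · have := geomInv_mul_left hS.pow_sz
    rwa [show (1 : Matrix (Fin sz) (Fin sz) R) + (X - 1) = X from by abel] at this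

lemma UniLo.mul {X Y : Matrix (Fin sz) (Fin sz) R} (hX : UniLo X) (hY : UniLo Y) :
    UniLo (X * Y) := by
  constructor
  · intro i
    rw [Matrix.mul_apply, Finset.sum_eq_single_of_mem i (Finset.mem_univ i)]
    · rw [hX.1, hY.1, one_mul]
    · intro k _ hk
      rcases lt_or_ge (k : ℕ) (i : ℕ) with hl | hl
      · rw [hY.2 k i hl, mul_zero]
      · have : (i : ℕ) < (k : ℕ) := lt_of_le_of_ne hl (by intro e; exact hk (Fin.ext e.symm))
        rw [hX.2 i k this, zero_mul]
  · intro i j hij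
    rw [Matrix.mul_apply]
    apply Finset.sum_eq_zero
    intro k _
    rcases lt_or_ge (i : ℕ) (k : ℕ) with hl | hl
    · rw [hX.2 i k hl, zero_mul]
    · rw [hY.2 k j (by omega), mul_zero]

lemma UniUp.mul {X Y : Matrix (Fin sz) (Fin sz) R} (hX : UniUp X) (hY : UniUp Y) :
    UniUp (X * Y) := by
  constructor
  · intro i
    rw [Matrix.mul_apply, Finset.sum_eq_single_of_mem i (Finset.mem_univ i)]
    · rw [hX.1, hY.1, one_mul]
    · intro k _ hk
      rcases lt_or_ge (k : ℕ) (i : ℕ) with hl | hl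
      · rw [hX.2 i k hl, zero_mul]
      · have : (i : ℕ) < (k : ℕ) := lt_of_le_of_ne hl (by intro e; exact hk (Fin.ext e.symm))
        rw [hY.2 k i this, mul_zero]
  · intro i j hij
    rw [Matrix.mul_apply]
    apply Finset.sum_eq_zero
    intro k _
    rcases lt_or_ge (k : ℕ) (i : ℕ) with hl | hl
    · rw [hX.2 i k hl, zero_mul]
    · rw [hY.2 k j (by omega), mul_zero]

lemma mul_diag_apply {X D : Matrix (Fin sz) (Fin sz) R} (hD : ∀ i j, i ≠ j → D i j = 0)
    (i j : Fin sz) : (X * D) i j = X i j * D j j := by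
  rw [Matrix.mul_apply]
  exact Finset.sum_eq_single_of_mem j (Finset.mem_univ j)
    (fun k _ hk => by rw [hD k j hk, mul_zero])

lemma diag_mul_apply {D X : Matrix (Fin sz) (Fin sz) R} (hD : ∀ i j, i ≠ j → D i j = 0)
    (i j : Fin sz) : (D * X) i j = D i i * X i j := by
  rw [Matrix.mul_apply]
  exact Finset.sum_eq_single_of_mem i (Finset.mem_univ i)
    (fun k _ hk => by rw [hD i k (fun e => hk e.symm), zero_mul])

lemma mul_cancel_left_of_mul_eq_one {S : Type*} [Monoid S] {a b : S} (h : a * b = 1)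
    (x : S) : a * (b * x) = x := by rw [← mul_assoc, h, one_mul]

lemma inv3 {S : Type*} [Monoid S] {a b c ai bi ci : S}
    (ha : a * ai = 1) (ha' : ai * a = 1) (hb : b * bi = 1) (hb' : bi * b = 1)
    (hc : c * ci = 1) (hc' : ci * c = 1) :
    (a * b * c) * (ci * (bi * ai)) = 1 ∧ (ci * (bi * ai)) * (a * b * c) = 1 := by
  constructor
  · have : a * (b * (c * (ci * (bi * ai)))) = 1 := by
      rw [mul_cancel_left_of_mul_eq_one hc, mul_cancel_left_of_mul_eq_one hb, ha]
    simpa only [mul_assoc] using this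
  · have : ci * (bi * (ai * (a * (b * c)))) = 1 := by
      rw [mul_cancel_left_of_mul_eq_one ha', mul_cancel_left_of_mul_eq_one hb', hc']
    simpa only [mul_assoc] using this

lemma ringInverse_eq_of {S : Type*} [Ring S] {a b : S} (h1 : a * b = 1) (h2 : b * a = 1) :
    Ring.inverse a = b :=
  Ring.inverse_unit (⟨a, b, h1, h2⟩ : Sˣ)

lemma map_ringInverse {S S' : Type*} [Ring S] [Ring S'] (f : S →+* S') {a b : S}
    (h1 : a * b = 1) (h2 : b * a = 1) : f (Ring.inverse a) = Ring.inverse (f a) := by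
  rw [ringInverse_eq_of h1 h2,
    ringInverse_eq_of (a := f a) (b := f b) (by rw [← _root_.map_mul, h1, _root_.map_one])
      (by rw [← _root_.map_mul, h2, _root_.map_one])]

/-- Uniqueness of Gauss decompositions. -/
lemma gauss_uniq {F D E F' D' E' : Matrix (Fin sz) (Fin sz) R}
    (hF : UniLo F) (hE : UniUp E) (hF' : UniLo F') (hE' : UniUp E')
    (hD : ∀ i j, i ≠ j → D i j = 0) (hD' : ∀ i j, i ≠ j → D' i j = 0)
    (hDu : ∀ i, IsUnit (D i i)) (hD'u : ∀ i, IsUnit (D' i i))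
    (h : F * D * E = F' * D' * E') : F = F' ∧ E = E' := by
  obtain ⟨hG'u, hF'G', hG'F'⟩ := hF'.inv
  set G' := geomInv (F' - 1) with hG'def
  obtain ⟨hEiu, hEEi, hEiE⟩ := hE.inv
  set Ei := geomInv (E - 1) with hEidef
  have key : (G' * F) * D = D' * (E' * Ei) := by
    have h1 : G' * (F * (D * (E * Ei))) = G' * (F' * (D' * (E' * Ei))) := by
      have := congrArg (fun X => G' * (X * Ei)) h
      simpa only [mul_assoc] using this
    rw [hEEi, mul_one, mul_cancel_left_of_mul_eq_one hG'F'] at h1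
    rw [← mul_assoc] at h1
    exact h1
  have hL : UniLo (G' * F) := hG'u.mul hF
  have hU : UniUp (E' * Ei) := hE'.mul hEiu
  have hU1 : E' * Ei = 1 := by
    ext i j
    rcases lt_trichotomy (i : ℕ) (j : ℕ) with hij | hij | hij
    · have h0 : (G' * F) i j * D j j = D' i i * (E' * Ei) i j := by
        have := congrFun (congrFun key i) j
        rwa [mul_diag_apply hD, diag_mul_apply hD'] at this
      rw [hL.2 i j hij, zero_mul] at h0
      rw [((hD'u i).mul_right_eq_zero).1 h0.symm,
        Matrix.one_apply_ne (by rintro rfl; omega)]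
    · have : i = j := Fin.ext hij
      subst this
      rw [hU.1, Matrix.one_apply_eq]
    · rw [hU.2 i j hij, Matrix.one_apply_ne (by rintro rfl; omega)]
  have hLD : (G' * F) * D = D' := by rwa [hU1, mul_one] at key
  have hL1 : G' * F = 1 := by
    ext i j
    rcases lt_trichotomy (i : ℕ) (j : ℕ) with hij | hij | hij
    · rw [hL.2 i j hij, Matrix.one_apply_ne (by rintro rfl; omega)]
    · have : i = j := Fin.ext hij
      subst this
      rw [hL.1, Matrix.one_apply_eq]
    · have h0 : (G' * F) i j * D j j = D' i j := by
        have := congrFun (congrFun hLD i) j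
        rwa [mul_diag_apply hD] at this
      rw [hD' i j (by rintro rfl; omega)] at h0
      rw [((hDu j).mul_left_eq_zero).1 h0, Matrix.one_apply_ne (by rintro rfl; omega)]
  constructor
  · have : F' * (G' * F) = F' * 1 := by rw [hL1]
    rwa [← mul_assoc, hF'G', one_mul, mul_one] at this
  · have : (E' * Ei) * E = 1 * E := by rw [hU1]
    rw [mul_assoc, hEiE, mul_one, one_mul] at this
    exact this.symm

lemma inv_superdiag {E V : Matrix (Fin sz) (Fin sz) R} (hE : UniUp E) (hV : UniUp V)
    (h : E * V = 1) {c d : Fin sz} (hcd : (d : ℕ) = (c : ℕ) + 1) : V c d = -(E c d) := by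
  have hne : c ≠ d := by rintro rfl; omega
  have h0 : ∑ k, E c k * V k d = 0 := by
    have h1 := congrFun (congrFun h c) d
    rw [Matrix.mul_apply] at h1
    rwa [Matrix.one_apply_ne hne] at h1
  have hsplit : ∀ k : Fin sz, E c k * V k d =
      (if k = c then V c d else 0) + (if k = d then E c d else 0) := by
    intro k
    rcases eq_or_ne k c with rfl | hkc
    · rw [if_pos rfl, if_neg hne, hE.1, one_mul, add_zero]
    rcases eq_or_ne k d with rfl | hkd
    · rw [if_neg hkc, if_pos rfl, hV.1, mul_one, zero_add]
    · rw [if_neg hkc, if_neg hkd, add_zero]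
      rcases lt_trichotomy (k : ℕ) (c : ℕ) with hk | hk | hk
      · rw [hE.2 c k hk, zero_mul]
      · exact absurd (Fin.ext hk) hkc
      · have hkd' : (d : ℕ) < (k : ℕ) := by
          rcases lt_or_ge (d : ℕ) (k : ℕ) with h' | h'
          · exact h'
          · exact absurd (Fin.ext (by omega)) hkd
        rw [hV.2 k d hkd', mul_zero]
  rw [Finset.sum_congr rfl (fun k _ => hsplit k), Finset.sum_add_distrib,
    Finset.sum_ite_eq' Finset.univ c, Finset.sum_ite_eq' Finset.univ d,
    if_pos (Finset.mem_univ c), if_pos (Finset.mem_univ d)] at h0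
  exact eq_neg_of_add_eq_zero_left h0

lemma inv_subdiag {F V : Matrix (Fin sz) (Fin sz) R} (hF : UniLo F) (hV : UniLo V)
    (h : F * V = 1) {c d : Fin sz} (hcd : (d : ℕ) = (c : ℕ) + 1) : V d c = -(F d c) := by
  have hne : d ≠ c := by rintro rfl; omega
  have h0 : ∑ k, F d k * V k c = 0 := by
    have h1 := congrFun (congrFun h d) c
    rw [Matrix.mul_apply] at h1
    rwa [Matrix.one_apply_ne hne] at h1
  have hsplit : ∀ k : Fin sz, F d k * V k c =
      (if k = d then V d c else 0) + (if k = c then F d c else 0) := by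
    intro k
    rcases eq_or_ne k d with rfl | hkd
    · rw [if_pos rfl, if_neg hne, hF.1, one_mul, add_zero]
    rcases eq_or_ne k c with rfl | hkc
    · rw [if_neg hkd, if_pos rfl, hV.1, mul_one, zero_add]
    · rw [if_neg hkd, if_neg hkc, add_zero]
      rcases lt_trichotomy (d : ℕ) (k : ℕ) with hk | hk | hk
      · rw [hF.2 d k hk, zero_mul]
      · exact absurd (Fin.ext hk.symm) hkd
      · have hkc' : (k : ℕ) < (c : ℕ) := by
          rcases lt_or_ge (k : ℕ) (c : ℕ) with h' | h'
          · exact h'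
          · exact absurd (Fin.ext (by omega)) hkc
        rw [hV.2 k c hkc', mul_zero]
  rw [Finset.sum_congr rfl (fun k _ => hsplit k), Finset.sum_add_distrib,
    Finset.sum_ite_eq' Finset.univ d, Finset.sum_ite_eq' Finset.univ c,
    if_pos (Finset.mem_univ d), if_pos (Finset.mem_univ c)] at h0
  exact eq_neg_of_add_eq_zero_left h0

end Aux


section Negu

variable {A B : Type*} [Ring A] [Ring B]

lemma negu_coeff (g : PowerSeries A) (p : ℕ) :
    PowerSeries.coeff p (negu g) = ((-1 : ℤ) ^ p) • PowerSeries.coeff p g := by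
  simp [negu]

lemma negu_negu (g : PowerSeries A) : negu (negu g) = g := by
  ext p
  rw [negu_coeff, negu_coeff, smul_smul, ← mul_pow]
  simp

lemma negu_mul (f g : PowerSeries A) : negu (f * g) = negu f * negu g := by
  ext p
  rw [negu_coeff, PowerSeries.coeff_mul, PowerSeries.coeff_mul, Finset.smul_sum]
  apply Finset.sum_congr rfl
  intro x hx
  rw [negu_coeff, negu_coeff, smul_mul_smul_comm, ← pow_add, Finset.HasAntidiagonal.mem_antidiagonal.mp hx]

/-- `negu` as a ring homomorphism. -/
def neguHom (A : Type*) [Ring A] : PowerSeries A →+* PowerSeries A where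
  toFun := negu
  map_one' := by
    ext p
    rw [negu_coeff]
    rcases eq_or_ne p 0 with rfl | h
    · simp
    · simp [PowerSeries.coeff_one, h]
  map_mul' := negu_mul
  map_zero' := by
    ext p
    rw [negu_coeff]
    simp
  map_add' := by
    intro f g
    ext p
    simp only [map_add, negu_coeff, smul_add]

@[simp] lemma neguHom_apply (g : PowerSeries A) : neguHom A g = negu g := rfl

lemma negu_map (f : A →+* B) (g : PowerSeries A) :
    PowerSeries.map f (negu g) = negu (PowerSeries.map f g) := by
  ext p
  rw [PowerSeries.coeff_map, negu_coeff, negu_coeff, PowerSeries.coeff_map, map_zsmul]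

end Negu

/-- For `m+1 ≤ i ≤ m+n-1`, the isomorphism
`ρ_{n|m} ∘ ω_{n|m} : Y(gl_{n|m}) → Y(gl_{m|n})` satisfies
`(ρ_{n|m} ∘ ω_{n|m})(f_{m+n-i}(v)) = -e_i(v)` and
`(ρ_{n|m} ∘ ω_{n|m})(e_{m+n-i}(v)) = -f_i(v)` (the `e`, `f` on the left coming from the
Gauss decomposition of `Y(gl_{n|m})`, those on the right from `Y(gl_{m|n})`;
`1`-based labels, so the `0`-based matrix entries are shifted by one). -/
theorem rho_omega_maps_f_to_e (m n : ℕ) (hn : 2 ≤ n)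
    (ω : Yangian n m →ₐ[ℂ] Yangian n m) (hω : omegaProp n m ω)
    (ρ : Yangian n m →ₐ[ℂ] Yangian m n) (hρ : rhoProp n m ρ)
    (F₁ D₁ E₁ : Matrix (Fin (n+m)) (Fin (n+m)) (PowerSeries (Yangian n m)))
    (hG₁ : IsGauss n m F₁ D₁ E₁)
    (F₂ D₂ E₂ : Matrix (Fin (m+n)) (Fin (m+n)) (PowerSeries (Yangian m n)))
    (hG₂ : IsGauss m n F₂ D₂ E₂)
    (i : ℕ) (hi1 : m + 1 ≤ i) (hi2 : i ≤ m + n - 1) :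
    PowerSeries.map (ρ.comp ω).toRingHom
        (F₁ ⟨m+n-i, by omega⟩ ⟨m+n-i-1, by omega⟩)
      = -E₂ ⟨i-1, by omega⟩ ⟨i, by omega⟩ ∧
    PowerSeries.map (ρ.comp ω).toRingHom
        (E₁ ⟨m+n-i-1, by omega⟩ ⟨m+n-i, by omega⟩)
      = -F₂ ⟨i, by omega⟩ ⟨i-1, by omega⟩ := by
  obtain ⟨hD₁od, hD₁c, hE₁d, hE₁z, hF₁d, hF₁z, hT₁⟩ := hG₁
  obtain ⟨hD₂od, hD₂c, hE₂d, hE₂z, hF₂d, hF₂z, hT₂⟩ := hG₂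
  -- the flip equivalence on indices
  let e : Fin (n+m) ≃ Fin (m+n) :=
    { toFun := flipIdx
      invFun := flipIdx
      left_inv := fun i => by
        have := i.isLt
        apply Fin.ext
        simp only [flipIdx]
        omega
      right_inv := fun j => by
        have := j.isLt
        apply Fin.ext
        simp only [flipIdx]
        omega }
  have hev : ∀ i : Fin (n+m), ((e i : Fin (m+n)) : ℕ) = n + m - 1 - (i : ℕ) := fun _ => rfl
  -- unitriangular data
  have hUE₁ : UniUp E₁ := ⟨hE₁d, hE₁z⟩
  have hUF₁ : UniLo F₁ := ⟨hF₁d, hF₁z⟩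
  have hUE₂ : UniUp E₂ := ⟨hE₂d, hE₂z⟩
  have hUF₂ : UniLo F₂ := ⟨hF₂d, hF₂z⟩
  obtain ⟨hUEi₁, hE₁Ei, hEi₁E⟩ := hUE₁.inv
  obtain ⟨hUFi₁, hF₁Fi, hFi₁F⟩ := hUF₁.inv
  obtain ⟨hUEi₂, hE₂Ei, hEi₂E⟩ := hUE₂.inv
  obtain ⟨hUFi₂, hF₂Fi, hFi₂F⟩ := hUF₂.inv
  set Ei₁ := geomInv (E₁ - 1) with hEi₁def
  set Fi₁ := geomInv (F₁ - 1) with hFi₁def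
  set Ei₂ := geomInv (E₂ - 1) with hEi₂def
  set Fi₂ := geomInv (F₂ - 1) with hFi₂def
  -- diagonal inverses
  have hD₁u : ∀ k, IsUnit (D₁ k k) := fun k =>
    PowerSeries.isUnit_iff_constantCoeff.mpr (by rw [hD₁c k]; exact isUnit_one)
  have hD₂u : ∀ k, IsUnit (D₂ k k) := fun k =>
    PowerSeries.isUnit_iff_constantCoeff.mpr (by rw [hD₂c k]; exact isUnit_one)
  let Di₁ : Matrix (Fin (n+m)) (Fin (n+m)) (PowerSeries (Yangian n m)) :=
    Matrix.diagonal fun k => ((hD₁u k).unit⁻¹ : (PowerSeries (Yangian n m))ˣ)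
  let Di₂ : Matrix (Fin (m+n)) (Fin (m+n)) (PowerSeries (Yangian m n)) :=
    Matrix.diagonal fun k => ((hD₂u k).unit⁻¹ : (PowerSeries (Yangian m n))ˣ)
  have hDi₁od : ∀ i j, i ≠ j → Di₁ i j = 0 := fun i j h => Matrix.diagonal_apply_ne _ h
  have hDi₂od : ∀ i j, i ≠ j → Di₂ i j = 0 := fun i j h => Matrix.diagonal_apply_ne _ h
  have hDi₁eq : ∀ k, Di₁ k k = ((hD₁u k).unit⁻¹ : (PowerSeries (Yangian n m))ˣ) :=
    fun k => Matrix.diagonal_apply_eq _ _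
  have hDi₂eq : ∀ k, Di₂ k k = ((hD₂u k).unit⁻¹ : (PowerSeries (Yangian m n))ˣ) :=
    fun k => Matrix.diagonal_apply_eq _ _
  have hD₁Di : D₁ * Di₁ = 1 := by
    apply Matrix.ext
    intro i j
    rw [mul_diag_apply hDi₁od]
    rcases eq_or_ne i j with rfl | h
    · rw [Matrix.one_apply_eq, hDi₁eq]
      exact (hD₁u i).mul_val_inv
    · rw [hD₁od i j h, zero_mul, Matrix.one_apply_ne h]
  have hDi₁D : Di₁ * D₁ = 1 := by
    apply Matrix.ext
    intro i j
    rw [diag_mul_apply hDi₁od]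
    rcases eq_or_ne i j with rfl | h
    · rw [Matrix.one_apply_eq, hDi₁eq]
      exact (hD₁u i).val_inv_mul
    · rw [hD₁od i j h, mul_zero, Matrix.one_apply_ne h]
  have hD₂Di : D₂ * Di₂ = 1 := by
    apply Matrix.ext
    intro i j
    rw [mul_diag_apply hDi₂od]
    rcases eq_or_ne i j with rfl | h
    · rw [Matrix.one_apply_eq, hDi₂eq]
      exact (hD₂u i).mul_val_inv
    · rw [hD₂od i j h, zero_mul, Matrix.one_apply_ne h]
  have hDi₂D : Di₂ * D₂ = 1 := by
    apply Matrix.ext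
    intro i j
    rw [diag_mul_apply hDi₂od]
    rcases eq_or_ne i j with rfl | h
    · rw [Matrix.one_apply_eq, hDi₂eq]
      exact (hD₂u i).val_inv_mul
    · rw [hD₂od i j h, mul_zero, Matrix.one_apply_ne h]
  -- two-sided inverses of T
  have hT₁inv := inv3 hF₁Fi hFi₁F hD₁Di hDi₁D hE₁Ei hEi₁E
  have hT₂inv := inv3 hF₂Fi hFi₂F hD₂Di hDi₂D hE₂Ei hEi₂E
  set Tinv₁ := Ei₁ * (Di₁ * Fi₁) with hTinv₁def
  set Tinv₂ := Ei₂ * (Di₂ * Fi₂) with hTinv₂def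
  have hT₁r : T n m * Tinv₁ = 1 := by rw [hT₁]; exact hT₁inv.1
  have hT₁l : Tinv₁ * T n m = 1 := by rw [hT₁]; exact hT₁inv.2
  have hT₂r : T m n * Tinv₂ = 1 := by rw [hT₂]; exact hT₂inv.1
  have hT₂l : Tinv₂ * T m n = 1 := by rw [hT₂]; exact hT₂inv.2
  -- ring homs
  let fh : PowerSeries (Yangian n m) →+* PowerSeries (Yangian m n) :=
    PowerSeries.map (ρ.comp ω).toRingHom
  let rh : PowerSeries (Yangian n m) →+* PowerSeries (Yangian m n) :=
    PowerSeries.map ρ.toRingHom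
  let oh : PowerSeries (Yangian n m) →+* PowerSeries (Yangian n m) :=
    PowerSeries.map ω.toRingHom
  have hfh : ∀ φ, fh φ = rh (oh φ) := fun φ => by
    ext p
    simp [fh, rh, oh, PowerSeries.coeff_map]
  let Φf : Matrix (Fin (n+m)) (Fin (n+m)) (PowerSeries (Yangian n m)) →+*
      Matrix (Fin (n+m)) (Fin (n+m)) (PowerSeries (Yangian m n)) := fh.mapMatrix
  let Φρ : Matrix (Fin (n+m)) (Fin (n+m)) (PowerSeries (Yangian n m)) →+*
      Matrix (Fin (n+m)) (Fin (n+m)) (PowerSeries (Yangian m n)) := rh.mapMatrix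
  let NM : Matrix (Fin (n+m)) (Fin (n+m)) (PowerSeries (Yangian m n)) →+*
      Matrix (Fin (n+m)) (Fin (n+m)) (PowerSeries (Yangian m n)) :=
    (neguHom (Yangian m n)).mapMatrix
  have hNM2 : ∀ X : Matrix (Fin (n+m)) (Fin (n+m)) (PowerSeries (Yangian m n)),
      NM (NM X) = X := by
    intro X
    apply Matrix.ext
    intro i j
    exact negu_negu (X i j)
  -- the key matrix computations
  have hA : Φρ (T n m) = NM ((T m n).submatrix e e) := by
    apply Matrix.ext
    intro i j
    show PowerSeries.map ρ.toRingHom (t i j) = negu (t (flipIdx i) (flipIdx j))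
    exact hρ i j
  have hB : Φf (T n m) = NM (Φρ (T' n m)) := by
    apply Matrix.ext
    intro i j
    show fh (t i j) = negu (rh (t' i j))
    rw [hfh (t i j), show oh (t i j) = negu (t' i j) from hω i j]
    exact negu_map _ _
  have hC : Φρ (T' n m) = Ring.inverse (Φρ (T n m)) := map_ringInverse Φρ hT₁r hT₁l
  have hsub_r : (T m n).submatrix e e * Tinv₂.submatrix e e = 1 := by
    rw [Matrix.submatrix_mul_equiv (T m n) Tinv₂ ⇑e e ⇑e, hT₂r, Matrix.submatrix_one_equiv]
  have hsub_l : Tinv₂.submatrix e e * (T m n).submatrix e e = 1 := by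
    rw [Matrix.submatrix_mul_equiv Tinv₂ (T m n) ⇑e e ⇑e, hT₂l, Matrix.submatrix_one_equiv]
  have hMain : Φf (T n m) = Tinv₂.submatrix e e := by
    calc Φf (T n m) = NM (Φρ (T' n m)) := hB
      _ = NM (Ring.inverse (Φρ (T n m))) := by rw [hC]
      _ = NM (Ring.inverse (NM ((T m n).submatrix e e))) := by rw [hA]
      _ = NM (NM (Ring.inverse ((T m n).submatrix e e))) := by
          rw [map_ringInverse NM hsub_r hsub_l]
      _ = NM (NM (Tinv₂.submatrix e e)) := by rw [ringInverse_eq_of hsub_r hsub_l]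
      _ = Tinv₂.submatrix e e := hNM2 _
  have hMain2 : Φf (T n m) = Φf F₁ * Φf D₁ * Φf E₁ := by
    rw [hT₁, _root_.map_mul, _root_.map_mul]
  have hsplit : Tinv₂.submatrix ⇑e ⇑e =
      Ei₂.submatrix ⇑e ⇑e * Di₂.submatrix ⇑e ⇑e * Fi₂.submatrix ⇑e ⇑e := by
    rw [hTinv₂def, ← mul_assoc, ← Matrix.submatrix_mul_equiv (Ei₂ * Di₂) Fi₂ ⇑e e ⇑e,
      ← Matrix.submatrix_mul_equiv Ei₂ Di₂ ⇑e e ⇑e]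
  -- triangularity of the pulled-back factors
  have hUF' : UniLo (Ei₂.submatrix ⇑e ⇑e) := by
    constructor
    · intro i
      exact hUEi₂.1 (e i)
    · intro i j hij
      apply hUEi₂.2
      rw [hev i, hev j]
      have := j.isLt
      omega
  have hUE' : UniUp (Fi₂.submatrix ⇑e ⇑e) := by
    constructor
    · intro i
      exact hUFi₂.1 (e i)
    · intro i j hij
      apply hUFi₂.2
      rw [hev i, hev j]
      have := i.isLt
      omega
  have hD'od : ∀ i j, i ≠ j → (Di₂.submatrix ⇑e ⇑e) i j = 0 := by
    intro i j hij
    rw [Matrix.submatrix_apply]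
    exact hDi₂od _ _ fun h => hij (e.injective h)
  have hD'u : ∀ i, IsUnit ((Di₂.submatrix ⇑e ⇑e) i i) := by
    intro i
    have h1 : (Di₂.submatrix ⇑e ⇑e) i i =
        ((hD₂u (e i)).unit⁻¹ : (PowerSeries (Yangian m n))ˣ) := by
      rw [Matrix.submatrix_apply]
      exact hDi₂eq (e i)
    rw [h1]
    exact Units.isUnit _
  -- triangularity of the mapped factors
  have hUFf : UniLo (Φf F₁) := by
    constructor
    · intro i
      show fh (F₁ i i) = 1
      rw [hF₁d i, map_one]
    · intro i j hij
      show fh (F₁ i j) = 0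
      rw [hF₁z i j hij, map_zero]
  have hUEf : UniUp (Φf E₁) := by
    constructor
    · intro i
      show fh (E₁ i i) = 1
      rw [hE₁d i, map_one]
    · intro i j hij
      show fh (E₁ i j) = 0
      rw [hE₁z i j hij, map_zero]
  have hDfod : ∀ i j, i ≠ j → (Φf D₁) i j = 0 := by
    intro i j hij
    show fh (D₁ i j) = 0
    rw [hD₁od i j hij, map_zero]
  have hDfu : ∀ k, IsUnit ((Φf D₁) k k) := by
    intro k
    apply PowerSeries.isUnit_iff_constantCoeff.mpr
    show IsUnit (PowerSeries.constantCoeff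
      (PowerSeries.map (ρ.comp ω).toRingHom (D₁ k k)))
    have h1 : PowerSeries.constantCoeff
        (PowerSeries.map (ρ.comp ω).toRingHom (D₁ k k)) = 1 := by
      rw [← PowerSeries.coeff_zero_eq_constantCoeff_apply, PowerSeries.coeff_map,
        PowerSeries.coeff_zero_eq_constantCoeff_apply, hD₁c k, map_one]
    rw [h1]
    exact isUnit_one
  -- uniqueness of the Gauss decomposition
  have hsame : Φf F₁ * Φf D₁ * Φf E₁ =
      Ei₂.submatrix ⇑e ⇑e * Di₂.submatrix ⇑e ⇑e * Fi₂.submatrix ⇑e ⇑e := by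
    rw [← hMain2, hMain, hsplit]
  obtain ⟨hFeq, hEeq⟩ := gauss_uniq hUFf hUEf hUF' hUE' hDfod hD'od hDfu hD'u hsame
  -- extract the entries
  have hilt : i - 1 < m + n := by omega
  have hilt' : i < m + n := by omega
  have hanm : m + n - i < n + m := by omega
  have hbnm : m + n - i - 1 < n + m := by omega
  let a : Fin (n+m) := ⟨m+n-i, hanm⟩
  let b : Fin (n+m) := ⟨m+n-i-1, hbnm⟩
  let c : Fin (m+n) := ⟨i-1, hilt⟩
  let d : Fin (m+n) := ⟨i, hilt'⟩
  have hea : e a = c := by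
    apply Fin.ext
    rw [hev a]
    show n + m - 1 - (m + n - i) = i - 1
    omega
  have heb : e b = d := by
    apply Fin.ext
    rw [hev b]
    show n + m - 1 - (m + n - i - 1) = i
    omega
  have hcd : (d : ℕ) = (c : ℕ) + 1 := by
    show i = (i - 1) + 1
    omega
  constructor
  · have hsd : Ei₂ c d = -(E₂ c d) := inv_superdiag hUE₂ hUEi₂ hE₂Ei hcd
    calc PowerSeries.map (ρ.comp ω).toRingHom (F₁ a b)
        = (Φf F₁) a b := rfl
      _ = (Ei₂.submatrix ⇑e ⇑e) a b := by rw [hFeq]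
      _ = Ei₂ (e a) (e b) := rfl
      _ = Ei₂ c d := by rw [hea, heb]
      _ = -(E₂ c d) := hsd
  · have hsd : Fi₂ d c = -(F₂ d c) := inv_subdiag hUF₂ hUFi₂ hF₂Fi hcd
    calc PowerSeries.map (ρ.comp ω).toRingHom (E₁ b a)
        = (Φf E₁) b a := rfl
      _ = (Fi₂.submatrix ⇑e ⇑e) b a := by rw [hEeq]
      _ = Fi₂ (e b) (e a) := rfl
      _ = Fi₂ d c := by rw [hea, heb]
      _ = -(F₂ d c) := hsd

end SuperYangian
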